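/- Let k ≥ 1, f_i, μ_i > 0 with ∑ f_i = 1, β, γ > 0, and let D > 0 satisfy (β/γ) ∑_j μ_j f_j / (1 + μ_j D) = 1. Let y*_i = μ_i f_i D/(1 + μ_i D) and V as defined below. Then V(0) − V(y*) = ∑_i f_i ln(1 + μ_i D) − (γ/β) D. -/

import Mathlib

noncomputable def Vsusc (k : ℕ) (f mu : Fin k → ℝ) (β γ : ℝ) (y : Fin k → ℝ) : ℝ :=
  (∑ i, y i * (1 + Real.log (y i) - Real.log ((β / γ) * mu i)))
    - (∑ i, y i) * Real.log (∑ i, y i)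
    + ∑ i, (f i - y i) * Real.log (f i - y i)

theorem stmt_7 (k : ℕ) (hk : 1 ≤ k) (f mu : Fin k → ℝ)
    (hf : ∀ i, 0 < f i) (hfs : ∑ i, f i = 1)
    (hm : ∀ i, 0 < mu i) (hms : ∑ i, mu i * f i = 1)
    (β γ : ℝ) (hβ : 0 < β) (hγ : 0 < γ)
    (D : ℝ) (hD : 0 < D)
    (hDeq : (β / γ) * ∑ j, mu j * f j / (1 + mu j * D) = 1)
    (ystar : Fin k → ℝ)
    (hy : ∀ i, ystar i = mu i * f i * D / (1 + mu i * D)) :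
    Vsusc k f mu β γ 0 - Vsusc k f mu β γ ystar
      = (∑ i, f i * Real.log (1 + mu i * D)) - (γ / β) * D := by
  have h1 : ∀ i, (0:ℝ) < 1 + mu i * D := fun i => by
    have := mul_pos (hm i) hD; linarith
  have hfy : ∀ i, f i - ystar i = f i / (1 + mu i * D) := fun i => by
    rw [hy i]; field_simp [(h1 i).ne']; ring
  have hT : ∑ j, mu j * f j / (1 + mu j * D) = γ / β := by
    have hne : β / γ ≠ 0 := by positivity
    field_simp at hDeq ⊢
    have e : ∀ x, 1 + D * mu x = 1 + mu x * D := fun x => by ring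
    simp only [e]
    linarith [hDeq]
  have hS : ∑ i, ystar i = γ / β * D := by
    have : ∑ i, ystar i = (∑ j, mu j * f j / (1 + mu j * D)) * D := by
      rw [Finset.sum_mul]
      exact Finset.sum_congr rfl (fun i _ => by rw [hy i]; ring)
    rw [this, hT]
  have hV0 : Vsusc k f mu β γ (0 : Fin k → ℝ) = ∑ i, f i * Real.log (f i) := by
    simp [Vsusc]
  have hterm : ∀ i,
      ystar i * (1 + Real.log (ystar i) - Real.log ((β / γ) * mu i))
        + (f i - ystar i) * Real.log (f i - ystar i)
      = ystar i * (1 + Real.log D - Real.log (β / γ))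
        + f i * Real.log (f i) - f i * Real.log (1 + mu i * D) := by
    intro i
    have hlog1 : Real.log (ystar i)
        = Real.log (mu i) + Real.log (f i) + Real.log D - Real.log (1 + mu i * D) := by
      rw [hy i, Real.log_div (mul_pos (mul_pos (hm i) (hf i)) hD).ne' (h1 i).ne',
        Real.log_mul (mul_pos (hm i) (hf i)).ne' hD.ne',
        Real.log_mul (hm i).ne' (hf i).ne']
    have hlog2 : Real.log ((β / γ) * mu i) = Real.log (β / γ) + Real.log (mu i) :=
      Real.log_mul (by positivity) (hm i).ne'
    have hlog3 : Real.log (f i - ystar i) = Real.log (f i) - Real.log (1 + mu i * D) := by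
      rw [hfy i, Real.log_div (hf i).ne' (h1 i).ne']
    rw [hlog1, hlog2, hlog3]
    ring
  have hVs : Vsusc k f mu β γ ystar
      = γ / β * D + ∑ i, f i * Real.log (f i) - ∑ i, f i * Real.log (1 + mu i * D) := by
    unfold Vsusc
    rw [hS]
    have hlogS : Real.log (γ / β * D) = Real.log D - Real.log (β / γ) := by
      rw [Real.log_mul (by positivity) hD.ne', Real.log_div hγ.ne' hβ.ne',
        Real.log_div hβ.ne' hγ.ne']
      ring
    have hsum : (∑ i, ystar i * (1 + Real.log (ystar i) - Real.log ((β / γ) * mu i)))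
        + ∑ i, (f i - ystar i) * Real.log (f i - ystar i)
        = ∑ i, (ystar i * (1 + Real.log D - Real.log (β / γ))
            + f i * Real.log (f i) - f i * Real.log (1 + mu i * D)) := by
      rw [← Finset.sum_add_distrib]
      exact Finset.sum_congr rfl (fun i _ => hterm i)
    have hsplit : ∑ i, (ystar i * (1 + Real.log D - Real.log (β / γ))
            + f i * Real.log (f i) - f i * Real.log (1 + mu i * D))
        = (∑ i, ystar i) * (1 + Real.log D - Real.log (β / γ))
          + ∑ i, f i * Real.log (f i) - ∑ i, f i * Real.log (1 + mu i * D) := by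
      rw [Finset.sum_sub_distrib, Finset.sum_add_distrib, Finset.sum_mul]
    rw [hlogS]
    have := hsum
    rw [hsplit, hS] at this
    linarith [this]
  rw [hV0, hVs]
  ring
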